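/- Let (T, ρ) be a finite metric tree and φ: T → ℝ a continuous, piecewise affine, convex function such that the directional derivative of φ is nonzero in every direction at every point of T (i.e., φ has no direction of zero slope). Then φ attains its minimum at a unique point of T. -/

import Mathlib

/-- `γ` is an arc-length geodesic segment from `a` to `b`. -/
def IsGeodesicSeg {T : Type*} [MetricSpace T] (a b : T) (γ : ℝ → T) : Prop :=
  γ 0 = a ∧ γ (dist a b) = b ∧
    ∀ s ∈ Set.Icc (0 : ℝ) (dist a b), ∀ t ∈ Set.Icc (0 : ℝ) (dist a b),
      dist (γ s) (γ t) = |s - t|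

/-- A finite metric tree: a compact, uniquely geodesic metric space which is the
union of finitely many geodesic segments (spanned by finitely many points). -/
def IsFinMetricTree (T : Type*) [MetricSpace T] : Prop :=
  CompactSpace T ∧
  (∀ a b : T, ∃ γ : ℝ → T, IsGeodesicSeg a b γ) ∧
  (∀ a b : T, ∀ γ₁ γ₂ : ℝ → T, IsGeodesicSeg a b γ₁ → IsGeodesicSeg a b γ₂ →
    Set.EqOn γ₁ γ₂ (Set.Icc 0 (dist a b))) ∧
  (∃ S : Finset T, ∀ x : T, ∃ a ∈ S, ∃ b ∈ S, ∃ γ : ℝ → T,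
    IsGeodesicSeg a b γ ∧ x ∈ γ '' Set.Icc 0 (dist a b))

/-- A continuous, piecewise affine, convex function on a finite metric tree whose
directional derivative is nonzero in every direction at every point attains its
minimum at a unique point. -/
theorem stmt_15 {T : Type*} [MetricSpace T] [Nonempty T] (hT : IsFinMetricTree T)
    (φ : T → ℝ) (hc : Continuous φ)
    (hconv : ∀ (a b : T) (γ : ℝ → T), IsGeodesicSeg a b γ →
      ConvexOn ℝ (Set.Icc 0 (dist a b)) (φ ∘ γ))
    (haff : ∀ (a b : T) (γ : ℝ → T), IsGeodesicSeg a b γ → a ≠ b →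
      ∃ ε > (0 : ℝ), ∃ c : ℝ, c ≠ 0 ∧
        ∀ t ∈ Set.Icc (0 : ℝ) (min ε (dist a b)), φ (γ t) = φ a + c * t) :
    ∃! x : T, ∀ y : T, φ x ≤ φ y := by
  obtain ⟨hcomp, hgeo, -, -⟩ := hT
  haveI := hcomp
  obtain ⟨x, -, hx⟩ := isCompact_univ.exists_isMinOn Set.univ_nonempty hc.continuousOn
  have hxmin : ∀ y : T, φ x ≤ φ y := fun y => hx (Set.mem_univ y)
  refine ⟨x, hxmin, fun y hy => ?_⟩
  by_contra hne
  obtain ⟨γ, hγ⟩ := hgeo y x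
  obtain ⟨ε, hε, c, hc0, hceq⟩ := haff y x γ hγ hne
  set d := dist y x with hd
  have hdpos : 0 < d := dist_pos.mpr hne
  set t := min ε d / 2 with ht
  have htpos : 0 < t := by positivity
  have htle : t ≤ min ε d := by
    have : 0 < min ε d := lt_min hε hdpos
    linarith
  have htled : t ≤ d := htle.trans (min_le_right _ _)
  have heq : φ (γ t) = φ y + c * t := hceq t ⟨htpos.le, htle⟩
  have hφyx : φ y = φ x := le_antisymm (hy x) (hxmin y)
  -- convexity bound
  have hcv := hconv y x γ hγ
  have h0 : (0 : ℝ) ∈ Set.Icc (0:ℝ) d := ⟨le_rfl, hdpos.le⟩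
  have hdmem : d ∈ Set.Icc (0:ℝ) d := ⟨hdpos.le, le_rfl⟩
  have ha : 0 ≤ 1 - t / d := by
    have : t / d ≤ 1 := (div_le_one hdpos).mpr htled
    linarith
  have hb : 0 ≤ t / d := by positivity
  have hab : (1 - t / d) + t / d = 1 := by ring
  have hkey := hcv.2 h0 hdmem ha hb hab
  have hsm : (1 - t / d) • (0:ℝ) + (t / d) • d = t := by
    rw [smul_eq_mul, smul_eq_mul, mul_zero, zero_add, div_mul_cancel₀ t hdpos.ne']
  rw [hsm] at hkey
  simp only [Function.comp, hγ.1, hγ.2.1] at hkey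
  rw [show γ d = x from hγ.2.1] at hkey
  -- hkey : φ (γ t) ≤ (1 - t/d) * φ y + (t/d) * φ x
  have hupper : φ (γ t) ≤ φ y := by
    rw [hφyx] at hkey ⊢
    calc φ (γ t) ≤ (1 - t/d) • φ x + (t/d) • φ x := hkey
    _ = φ x := by simp [smul_eq_mul]; ring
  have hlower : φ y ≤ φ (γ t) := hφyx ▸ hxmin (γ t)
  have : c * t = 0 := by linarith [heq ▸ hupper, heq ▸ hlower]
  exact hc0 (by
    rcases mul_eq_zero.mp this with h | h
    · exact h
    · exact absurd h htpos.ne')
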